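/- There exists a 3-partite 3-uniform hypergraph H with at least one edge such that for every pair of vertices u, v of H, the matching number of H with u and v deleted equals the matching number of H. -/
import Mathlib

/-- The matching number of a hypergraph given by its finite set of edges:
the largest size of a set of pairwise disjoint edges. -/
noncomputable def matchNum {V : Type*} [DecidableEq V] (E : Finset (Finset V)) : ℕ :=
  sSup {n | ∃ M : Finset (Finset V), M ⊆ E ∧
    (∀ e ∈ M, ∀ f ∈ M, e ≠ f → Disjoint e f) ∧ M.card = n}

section aux
variable {V : Type*} [DecidableEq V]

private lemma matchSet_nonempty (E : Finset (Finset V)) :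
    Set.Nonempty {n | ∃ M : Finset (Finset V), M ⊆ E ∧
      (∀ e ∈ M, ∀ f ∈ M, e ≠ f → Disjoint e f) ∧ M.card = n} :=
  ⟨0, ∅, Finset.empty_subset _, by simp, Finset.card_empty⟩

private lemma matchSet_bdd (E : Finset (Finset V)) :
    BddAbove {n | ∃ M : Finset (Finset V), M ⊆ E ∧
      (∀ e ∈ M, ∀ f ∈ M, e ≠ f → Disjoint e f) ∧ M.card = n} :=
  ⟨E.card, fun _ ⟨M, hM, _, hc⟩ => hc ▸ Finset.card_le_card hM⟩

private lemma le_matchNum {E M : Finset (Finset V)} (hM : M ⊆ E)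
    (hd : ∀ e ∈ M, ∀ f ∈ M, e ≠ f → Disjoint e f) : M.card ≤ matchNum E :=
  le_csSup (matchSet_bdd E) ⟨M, hM, hd, rfl⟩

private lemma matchNum_le {E : Finset (Finset V)} {n : ℕ}
    (h : ∀ M : Finset (Finset V), M ⊆ E →
      (∀ e ∈ M, ∀ f ∈ M, e ≠ f → Disjoint e f) → M.card ≤ n) : matchNum E ≤ n :=
  csSup_le (matchSet_nonempty E) (fun _ ⟨M, hM, hd, hc⟩ => hc ▸ h M hM hd)

private lemma matchNum_mono {E' E : Finset (Finset V)} (h : E' ⊆ E) :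
    matchNum E' ≤ matchNum E :=
  matchNum_le (fun M hM hd => le_matchNum (hM.trans h) hd)

end aux

private abbrev T5 := Fin 5 × Fin 5 × Fin 5

private def myT : List T5 :=
  [(0,0,4),(0,1,2),(0,4,0),(1,3,3),(1,4,2),(2,2,3),(2,3,2),(3,0,3),(3,1,4),(3,2,1),
   (4,2,0),(4,3,4),(4,4,1)]

private def dj (e f : T5) : Prop := e.1 ≠ f.1 ∧ e.2.1 ≠ f.2.1 ∧ e.2.2 ≠ f.2.2

private instance (e f : T5) : Decidable (dj e f) := by unfold dj; infer_instance

private def va (a : Fin 5) : Fin 15 := ⟨a.val, by omega⟩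
private def vb (b : Fin 5) : Fin 15 := ⟨5 + b.val, by omega⟩
private def vc (c : Fin 5) : Fin 15 := ⟨10 + c.val, by omega⟩

private def toEdge (t : T5) : Finset (Fin 15) := {va t.1, vb t.2.1, vc t.2.2}

private def hit (u : Fin 15) (t : T5) : Prop :=
  u = va t.1 ∨ u = vb t.2.1 ∨ u = vc t.2.2

private instance (u : Fin 15) (t : T5) : Decidable (hit u t) := by
  unfold hit; infer_instance

private lemma mem_toEdge {u : Fin 15} {t : T5} : u ∈ toEdge t ↔ hit u t := by
  simp [toEdge, hit, Finset.mem_insert, Finset.mem_singleton]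

private lemma va_inj {x y : Fin 5} (h : va x = va y) : x = y := by
  have := congrArg Fin.val h; simp only [va] at this; exact Fin.ext this
private lemma vb_inj {x y : Fin 5} (h : vb x = vb y) : x = y := by
  have := congrArg Fin.val h; simp only [vb] at this; exact Fin.ext (by omega)
private lemma vc_inj {x y : Fin 5} (h : vc x = vc y) : x = y := by
  have := congrArg Fin.val h; simp only [vc] at this; exact Fin.ext (by omega)
private lemma va_ne_vb {x y : Fin 5} : va x ≠ vb y := by
  intro h; have := congrArg Fin.val h; simp only [va, vb] at this; omega
private lemma va_ne_vc {x y : Fin 5} : va x ≠ vc y := by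
  intro h; have := congrArg Fin.val h; simp only [va, vc] at this; omega
private lemma vb_ne_vc {x y : Fin 5} : vb x ≠ vc y := by
  intro h; have := congrArg Fin.val h; simp only [vb, vc] at this; omega

private lemma disjoint_of_dj {t t' : T5} (h : dj t t') :
    Disjoint (toEdge t) (toEdge t') := by
  obtain ⟨h₁, h₂, h₃⟩ := h
  rw [Finset.disjoint_left]
  intro u hu hu'
  rcases mem_toEdge.1 hu with rfl | rfl | rfl <;>
    rcases mem_toEdge.1 hu' with heq | heq | heq
  · exact h₁ (va_inj heq)
  · exact va_ne_vb heq
  · exact va_ne_vc heq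
  · exact va_ne_vb heq.symm
  · exact h₂ (vb_inj heq)
  · exact vb_ne_vc heq
  · exact va_ne_vc heq.symm
  · exact vb_ne_vc heq.symm
  · exact h₃ (vc_inj heq)

private lemma ne_of_dj {t t' : T5} (h : dj t t') : toEdge t ≠ toEdge t' := fun heq =>
  Finset.disjoint_left.1 (disjoint_of_dj h) (mem_toEdge.2 (Or.inl rfl))
    (heq ▸ mem_toEdge.2 (Or.inl rfl))

private lemma dj_of_disjoint {t t' : T5} (h : Disjoint (toEdge t) (toEdge t')) :
    dj t t' := by
  refine ⟨fun he => ?_, fun he => ?_, fun he => ?_⟩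
  · exact Finset.disjoint_left.1 h (mem_toEdge.2 (Or.inl rfl))
      (mem_toEdge.2 (Or.inl (by rw [he])))
  · exact Finset.disjoint_left.1 h (mem_toEdge.2 (Or.inr (Or.inl rfl)))
      (mem_toEdge.2 (Or.inr (Or.inl (by rw [he]))))
  · exact Finset.disjoint_left.1 h (mem_toEdge.2 (Or.inr (Or.inr rfl)))
      (mem_toEdge.2 (Or.inr (Or.inr (by rw [he]))))

private def myE : Finset (Finset (Fin 15)) := (myT.map toEdge).toFinset

private lemma mem_myE {e : Finset (Fin 15)} :
    e ∈ myE ↔ ∃ t ∈ myT, toEdge t = e := by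
  simp [myE, List.mem_toFinset, List.mem_map]

private def myPart : Fin 15 → Fin 3 := fun v => ⟨v.val / 5, by omega⟩

set_option maxRecDepth 4000 in
private lemma no4 : ∀ t₁ ∈ myT, ∀ t₂ ∈ myT, ∀ t₃ ∈ myT, ∀ t₄ ∈ myT,
    dj t₁ t₂ → dj t₁ t₃ → dj t₁ t₄ → dj t₂ t₃ → dj t₂ t₄ → dj t₃ t₄ → False := by
  decide

set_option maxRecDepth 4000 in
private lemma pairs3 : ∀ u v : Fin 15, ∃ t₁ ∈ myT, ∃ t₂ ∈ myT, ∃ t₃ ∈ myT,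
    ¬ hit u t₁ ∧ ¬ hit v t₁ ∧ ¬ hit u t₂ ∧ ¬ hit v t₂ ∧ ¬ hit u t₃ ∧ ¬ hit v t₃ ∧
    dj t₁ t₂ ∧ dj t₁ t₃ ∧ dj t₂ t₃ := by decide

private lemma four_distinct {α : Type*} [DecidableEq α] {N : Finset α} (h : N.card = 4) :
    ∃ a ∈ N, ∃ b ∈ N, ∃ c ∈ N, ∃ d ∈ N,
      a ≠ b ∧ a ≠ c ∧ a ≠ d ∧ b ≠ c ∧ b ≠ d ∧ c ≠ d := by
  have hpos : 0 < N.card := by omega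
  obtain ⟨a, ha⟩ := Finset.card_pos.1 hpos
  have h1 : (N.erase a).card = 3 := by rw [Finset.card_erase_of_mem ha, h]
  obtain ⟨b, c, d, hbc, hbd, hcd, he⟩ := Finset.card_eq_three.1 h1
  have hb : b ∈ N.erase a := by rw [he]; simp
  have hc : c ∈ N.erase a := by rw [he]; simp
  have hd : d ∈ N.erase a := by rw [he]; simp
  exact ⟨a, ha, b, Finset.mem_of_mem_erase hb, c, Finset.mem_of_mem_erase hc,
    d, Finset.mem_of_mem_erase hd, (Finset.ne_of_mem_erase hb).symm,
    (Finset.ne_of_mem_erase hc).symm, (Finset.ne_of_mem_erase hd).symm, hbc, hbd, hcd⟩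

private lemma myE_no4 : ∀ M : Finset (Finset (Fin 15)), M ⊆ myE →
    (∀ e ∈ M, ∀ f ∈ M, e ≠ f → Disjoint e f) → M.card ≤ 3 := by
  intro M hM hd
  by_contra hlt
  obtain ⟨N, hN, hN4⟩ := Finset.exists_subset_card_eq (s := M) (n := 4) (by omega)
  obtain ⟨a, ha, b, hb, c, hc, d, hdm, hab, hac, had, hbc, hbd, hcd⟩ := four_distinct hN4
  obtain ⟨t₁, ht₁, rfl⟩ := mem_myE.1 (hM (hN ha))
  obtain ⟨t₂, ht₂, rfl⟩ := mem_myE.1 (hM (hN hb))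
  obtain ⟨t₃, ht₃, rfl⟩ := mem_myE.1 (hM (hN hc))
  obtain ⟨t₄, ht₄, rfl⟩ := mem_myE.1 (hM (hN hdm))
  exact no4 t₁ ht₁ t₂ ht₂ t₃ ht₃ t₄ ht₄
    (dj_of_disjoint (hd _ (hN ha) _ (hN hb) hab))
    (dj_of_disjoint (hd _ (hN ha) _ (hN hc) hac))
    (dj_of_disjoint (hd _ (hN ha) _ (hN hdm) had))
    (dj_of_disjoint (hd _ (hN hb) _ (hN hc) hbc))
    (dj_of_disjoint (hd _ (hN hb) _ (hN hdm) hbd))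
    (dj_of_disjoint (hd _ (hN hc) _ (hN hdm) hcd))

private lemma three_le_filter (u v : Fin 15) :
    3 ≤ matchNum (myE.filter fun e => u ∉ e ∧ v ∉ e) := by
  obtain ⟨t₁, ht₁, t₂, ht₂, t₃, ht₃, hu₁, hv₁, hu₂, hv₂, hu₃, hv₃, d₁₂, d₁₃, d₂₃⟩ :=
    pairs3 u v
  set e₁ := toEdge t₁; set e₂ := toEdge t₂; set e₃ := toEdge t₃
  have m₁ : e₁ ∈ myE := mem_myE.2 ⟨t₁, ht₁, rfl⟩
  have m₂ : e₂ ∈ myE := mem_myE.2 ⟨t₂, ht₂, rfl⟩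
  have m₃ : e₃ ∈ myE := mem_myE.2 ⟨t₃, ht₃, rfl⟩
  have hsub : ({e₁, e₂, e₃} : Finset (Finset (Fin 15))) ⊆
      myE.filter fun e => u ∉ e ∧ v ∉ e := by
    intro e he
    simp only [Finset.mem_insert, Finset.mem_singleton] at he
    rcases he with rfl | rfl | rfl
    · exact Finset.mem_filter.2 ⟨m₁, fun h => hu₁ (mem_toEdge.1 h),
        fun h => hv₁ (mem_toEdge.1 h)⟩
    · exact Finset.mem_filter.2 ⟨m₂, fun h => hu₂ (mem_toEdge.1 h),
        fun h => hv₂ (mem_toEdge.1 h)⟩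
    · exact Finset.mem_filter.2 ⟨m₃, fun h => hu₃ (mem_toEdge.1 h),
        fun h => hv₃ (mem_toEdge.1 h)⟩
  have hcard : ({e₁, e₂, e₃} : Finset (Finset (Fin 15))).card = 3 :=
    Finset.card_eq_three.2 ⟨e₁, e₂, e₃, ne_of_dj d₁₂, ne_of_dj d₁₃, ne_of_dj d₂₃, rfl⟩
  have hd : ∀ e ∈ ({e₁, e₂, e₃} : Finset (Finset (Fin 15))),
      ∀ f ∈ ({e₁, e₂, e₃} : Finset (Finset (Fin 15))), e ≠ f → Disjoint e f := by
    intro e he f hf hne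
    simp only [Finset.mem_insert, Finset.mem_singleton] at he hf
    rcases he with rfl | rfl | rfl <;> rcases hf with rfl | rfl | rfl <;>
      first
        | exact absurd rfl hne
        | exact disjoint_of_dj d₁₂
        | exact disjoint_of_dj d₁₃
        | exact disjoint_of_dj d₂₃
        | exact (disjoint_of_dj d₁₂).symm
        | exact (disjoint_of_dj d₁₃).symm
        | exact (disjoint_of_dj d₂₃).symm
  exact hcard ▸ le_matchNum hsub hd

private lemma myE_matchNum : matchNum myE = 3 := by
  apply le_antisymm (matchNum_le myE_no4)
  exact le_trans (three_le_filter 0 0) (matchNum_mono (Finset.filter_subset _ _))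

private lemma part_unique : ∀ t : T5, ∀ k : Fin 3,
    ∃! w, w ∈ toEdge t ∧ myPart w = k := by
  intro t k
  fin_cases k
  · refine ⟨va t.1, ⟨mem_toEdge.2 (Or.inl rfl), Fin.ext (by simp [myPart, va]; try omega)⟩, ?_⟩
    rintro y ⟨hy, hpy⟩
    have hval := congrArg Fin.val hpy
    rcases mem_toEdge.1 hy with rfl | rfl | rfl
    · rfl
    · simp [myPart, vb] at hval <;> omega
    · simp [myPart, vc] at hval <;> omega
  · refine ⟨vb t.2.1, ⟨mem_toEdge.2 (Or.inr (Or.inl rfl)),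
      Fin.ext (by simp [myPart, vb]; try omega)⟩, ?_⟩
    rintro y ⟨hy, hpy⟩
    have hval := congrArg Fin.val hpy
    rcases mem_toEdge.1 hy with rfl | rfl | rfl
    · simp [myPart, va] at hval <;> omega
    · rfl
    · simp [myPart, vc] at hval <;> omega
  · refine ⟨vc t.2.2, ⟨mem_toEdge.2 (Or.inr (Or.inr rfl)),
      Fin.ext (by simp [myPart, vc]; try omega)⟩, ?_⟩
    rintro y ⟨hy, hpy⟩
    have hval := congrArg Fin.val hpy
    rcases mem_toEdge.1 hy with rfl | rfl | rfl
    · simp [myPart, va] at hval <;> omega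
    · simp [myPart, vb] at hval <;> omega
    · rfl

/-- There exists a 3-partite 3-uniform hypergraph `H` with at least one edge such that
deleting any pair of vertices does not decrease the matching number. -/
theorem lovasz_conjecture_false :
    ∃ (V : Type) (_ : Fintype V) (_ : DecidableEq V)
      (part : V → Fin 3) (E : Finset (Finset V)),
      E.Nonempty ∧
      (∀ e ∈ E, ∀ k : Fin 3, ∃! v, v ∈ e ∧ part v = k) ∧
      ∀ u v : V,
        matchNum (E.filter fun e => u ∉ e ∧ v ∉ e) = matchNum E := by
  refine ⟨Fin 15, inferInstance, inferInstance, myPart, myE,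
    ⟨toEdge (0,0,4), mem_myE.2 ⟨(0,0,4), by simp [myT], rfl⟩⟩, ?_, ?_⟩
  · intro e he k
    obtain ⟨t, _, rfl⟩ := mem_myE.1 he
    exact part_unique t k
  · intro u v
    rw [myE_matchNum]
    exact le_antisymm
      (le_trans (matchNum_mono (Finset.filter_subset _ _)) (le_of_eq myE_matchNum))
      (three_le_filter u v)
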